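/- For every integer n \ge 2 and every real t with 0 < t < 1/2, one has |B_{2n+1}(t)| < (\sqrt{3}/9)(1 - 2^{1-2n})(2n+1)|B_{2n}|. -/

import Mathlib

open Set Real Filter

noncomputable def B (n : ℕ) (t : ℝ) : ℝ := Polynomial.aeval t (Polynomial.bernoulli n)

noncomputable def Bnum (n : ℕ) : ℝ := ((bernoulli n : ℚ) : ℝ)

lemma tele_hasSum : HasSum (fun l : ℕ => 1/((l:ℝ)+2) - 1/((l:ℝ)+3)) (1/2) := by
  have hnn : ∀ l : ℕ, 0 ≤ 1/((l:ℝ)+2) - 1/((l:ℝ)+3) := by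
    intro l
    have : 1/((l:ℝ)+3) ≤ 1/((l:ℝ)+2) :=
      one_div_le_one_div_of_le (by positivity) (by linarith)
    linarith
  rw [hasSum_iff_tendsto_nat_of_nonneg hnn]
  have hps : ∀ N : ℕ, ∑ i ∈ Finset.range N, (1/((i:ℝ)+2) - 1/((i:ℝ)+3))
      = 1/2 - 1/((N:ℝ)+2) := by
    intro N
    have h := Finset.sum_range_sub' (fun i : ℕ => 1/((i:ℝ)+2)) N
    have h2 : ∑ i ∈ Finset.range N, (1/((i:ℝ)+2) - 1/((i:ℝ)+3))
        = ∑ i ∈ Finset.range N, (1/((i:ℝ)+2) - 1/((↑(i+1):ℝ)+2)) := by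
      apply Finset.sum_congr rfl
      intro i _
      push_cast
      ring_nf
    rw [h2, h]
    norm_num
  simp only [hps]
  have h0 : Tendsto (fun N : ℕ => 1/((N:ℝ)+2)) atTop (nhds 0) := by
    have h1 : Tendsto (fun N : ℕ => (N:ℝ)+2) atTop atTop :=
      tendsto_atTop_add_const_right atTop 2 tendsto_natCast_atTop_atTop
    simp only [one_div]
    exact h1.inv_tendsto_atTop
  have := tendsto_const_nhds (x := (1/2:ℝ)) (f := atTop (α := ℕ)) |>.sub h0
  simpa using this

/-- the majorant -/
noncomputable def maj : ℕ → ℝ := fun m =>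
  if m = 0 then 0 else if m = 1 then 1 else if m = 2 then 1/32
  else (1/27) * (1/((m:ℝ)-1) - 1/(m:ℝ))

lemma maj_hasSum : HasSum maj (907/864) := by
  have h1 : HasSum (fun l : ℕ => maj (l + 3)) (1/54) := by
    have h2 : HasSum (fun l : ℕ => (1/27) * (1/((l:ℝ)+2) - 1/((l:ℝ)+3))) ((1/27) * (1/2)) :=
      tele_hasSum.mul_left _
    have h3 : (fun l : ℕ => maj (l + 3)) =
        (fun l : ℕ => (1/27) * (1/((l:ℝ)+2) - 1/((l:ℝ)+3))) := by
      funext l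
      simp only [maj]
      rw [if_neg (by omega), if_neg (by omega), if_neg (by omega)]
      push_cast
      ring_nf
    rw [h3]
    convert h2 using 1
    norm_num
  have := (hasSum_nat_add_iff (f := maj) 3).mp h1
  have h4 : ∑ i ∈ Finset.range 3, maj i = 33/32 := by
    simp [Finset.sum_range_succ, maj]
    norm_num
  have e : (1/54:ℝ) + 33/32 = 907/864 := by norm_num
  rw [h4, e] at this
  exact this


lemma aux_lhs (E r q p : ℝ) (hr : r ≠ 0) (hq : q ≠ 0) (hp : p ≠ 0) :
    (907/864) * 2 * E / (4*r*q*p) = (907/(1728*p)) * (E/(r*q)) := by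
  field_simp
  ring

lemma aux_rhs (s c a r q : ℝ) :
    (s / 9) * (7/8) * c * (a / (r * q)) = (7 * s / 72) * (c * a / (r * q)) := by
  ring

theorem stmt10 (n : ℕ) (hn : 2 ≤ n) (t : ℝ) (ht : 0 < t) (ht2 : t < 1/2) :
    |B (2*n+1) t| < (Real.sqrt 3 / 9) * (1 - 1/(2:ℝ)^(2*n-1)) * (2*n+1 : ℝ) * |Bnum (2*n)| := by
  have hn0 : n ≠ 0 := by omega
  have hpi : (0:ℝ) < π := Real.pi_pos
  have hx : t ∈ Icc (0:ℝ) 1 := ⟨ht.le, by linarith⟩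
  -- the sine series
  have hsin := hasSum_one_div_nat_pow_mul_sin hn0 hx
  have hBe : (Polynomial.map (algebraMap ℚ ℝ) (Polynomial.bernoulli (2*n+1))).eval t
      = B (2*n+1) t := by
    rw [B, Polynomial.aeval_def, Polynomial.eval_map]
  rw [hBe] at hsin
  set g : ℕ → ℝ := fun m => 1 / (m : ℝ) ^ (2*n+1) * Real.sin (2 * π * m * t) with hg
  have hgen : ∀ m : ℕ, |g m| ≤ 1/(m:ℝ)^(2*n+1) := by
    intro m
    rw [hg]
    simp only
    rw [abs_mul, abs_of_nonneg (by positivity : (0:ℝ) ≤ 1/(m:ℝ)^(2*n+1))]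
    calc 1/(m:ℝ)^(2*n+1) * |Real.sin (2*π*m*t)| ≤ 1/(m:ℝ)^(2*n+1) * 1 :=
          mul_le_mul_of_nonneg_left (Real.abs_sin_le_one _) (by positivity)
      _ = 1/(m:ℝ)^(2*n+1) := mul_one _
  -- pointwise bound
  have hpt : ∀ m : ℕ, |g m| ≤ maj m := by
    intro m
    match m with
    | 0 =>
      have : g 0 = 0 := by simp [hg]
      simp [this, maj]
    | 1 =>
      simpa [maj] using hgen 1
    | 2 =>
      refine le_trans (hgen 2) ?_
      have h2 : (2:ℝ)^5 ≤ ((2:ℕ):ℝ)^(2*n+1) := by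
        push_cast
        exact pow_le_pow_right₀ one_le_two (by omega)
      have h3 : 1/((2:ℕ):ℝ)^(2*n+1) ≤ 1/32 := by
        rw [show (32:ℝ) = 2^5 by norm_num]
        exact one_div_le_one_div_of_le (by positivity) h2
      simpa [maj] using h3
    | (l+3) =>
      refine le_trans (hgen (l+3)) ?_
      have hm3 : (3:ℝ) ≤ ((l+3:ℕ):ℝ) := by push_cast; linarith [Nat.cast_nonneg (α := ℝ) l]
      set x : ℝ := ((l+3:ℕ):ℝ) with hxdef
      have hx0 : (0:ℝ) < x := by linarith
      have hx1 : x - 1 ≠ 0 := by intro h; nlinarith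
      have hxne : x ≠ 0 := by positivity
      simp only [maj, if_neg (by omega : (l+3:ℕ) ≠ 0), if_neg (by omega : (l+3:ℕ) ≠ 1),
        if_neg (by omega : (l+3:ℕ) ≠ 2)]
      have h2 : 1 / x^(2*n+1) ≤ 1 / x^5 := by
        apply one_div_le_one_div_of_le (by positivity)
        exact pow_le_pow_right₀ (by linarith) (by omega)
      have hkey : (1/27) * (1/(x-1) - 1/x) = 1 / (27*(x-1)*x) := by
        field_simp
        ring
      have h3 : 1 / x^5 ≤ (1/27) * (1/(x-1) - 1/x) := by
        rw [hkey, div_le_div_iff₀ (by positivity) (by nlinarith)]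
        nlinarith [sq_nonneg (x-3), sq_nonneg x, pow_pos hx0 3]
      exact le_trans h2 h3
  -- summability and sum bound
  have hsum_abs : Summable (fun m => |g m|) :=
    Summable.of_nonneg_of_le (fun m => abs_nonneg _) hpt maj_hasSum.summable
  have habs1 : |((-1:ℝ)) ^ (n + 1) * (2 * π) ^ (2 * n + 1) / 2 / (Nat.factorial (2 * n + 1) : ℝ) *
      B (2*n+1) t| ≤ 907/864 := by
    rw [← hsin.tsum_eq]
    have hnorm := norm_tsum_le_tsum_norm (f := g) (by simpa [Real.norm_eq_abs] using hsum_abs)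
    simp only [Real.norm_eq_abs] at hnorm
    calc |∑' m, g m| ≤ ∑' m, |g m| := hnorm
      _ ≤ ∑' m, maj m := hsum_abs.tsum_le_tsum hpt maj_hasSum.summable
      _ = 907/864 := maj_hasSum.tsum_eq
  -- extract |B| bound
  have habs2 : (2 * π) ^ (2 * n + 1) / 2 / (Nat.factorial (2 * n + 1) : ℝ) * |B (2*n+1) t|
      ≤ 907/864 := by
    have heq : |((-1:ℝ)) ^ (n + 1) * (2 * π) ^ (2 * n + 1) / 2 / (Nat.factorial (2 * n + 1) : ℝ) *
        B (2*n+1) t|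
        = (2 * π) ^ (2 * n + 1) / 2 / (Nat.factorial (2 * n + 1) : ℝ) * |B (2*n+1) t| := by
      rw [abs_mul, abs_div, abs_div, abs_mul, abs_pow, abs_neg, abs_one, one_pow, one_mul,
        abs_of_pos (by positivity : (0:ℝ) < (2*π)^(2*n+1)),
        abs_of_pos (by norm_num : (0:ℝ) < (2:ℝ)),
        abs_of_pos (by positivity : (0:ℝ) < (Nat.factorial (2*n+1) : ℝ))]
    rw [← heq]
    exact habs1
  -- zeta lower bound
  have hzeta := hasSum_zeta_nat (k := n) hn0
  have hone : (1:ℝ) ≤ (-1:ℝ) ^ (n + 1) * (2:ℝ) ^ (2 * n - 1) * π ^ (2 * n) *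
      ((bernoulli (2 * n) : ℚ) : ℝ) / (Nat.factorial (2 * n) : ℝ) := by
    have h := le_hasSum hzeta 1 (fun j _ => by positivity)
    simpa using h
  have hZabs : (-1:ℝ) ^ (n + 1) * (2:ℝ) ^ (2 * n - 1) * π ^ (2 * n) *
      ((bernoulli (2 * n) : ℚ) : ℝ) / (Nat.factorial (2 * n) : ℝ)
      ≤ (2:ℝ) ^ (2 * n - 1) * π ^ (2 * n) * |Bnum (2*n)| / (Nat.factorial (2 * n) : ℝ) := by
    refine le_trans (le_abs_self _) (le_of_eq ?_)
    rw [abs_div, abs_mul, abs_mul, abs_mul, abs_pow, abs_neg, abs_one, one_pow, one_mul,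
      abs_of_pos (by positivity : (0:ℝ) < (2:ℝ)^(2*n-1)),
      abs_of_pos (by positivity : (0:ℝ) < π^(2*n)),
      abs_of_pos (by positivity : (0:ℝ) < (Nat.factorial (2*n) : ℝ))]
    rfl
  have hBnum : (Nat.factorial (2*n) : ℝ) / ((2:ℝ)^(2*n-1) * π^(2*n)) ≤ |Bnum (2*n)| := by
    have h1 : (1:ℝ) ≤ (2:ℝ) ^ (2 * n - 1) * π ^ (2 * n) * |Bnum (2*n)| /
        (Nat.factorial (2 * n) : ℝ) := le_trans hone hZabs
    rw [le_div_iff₀ (by positivity : (0:ℝ) < (Nat.factorial (2*n) : ℝ))] at h1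
    rw [div_le_iff₀ (by positivity)]
    nlinarith [h1]
  -- numeric facts
  have hs3sq := Real.sq_sqrt (show (0:ℝ) ≤ 3 by norm_num)
  have hs3nn := Real.sqrt_nonneg 3
  have hsqrt3 : (1.732:ℝ) < Real.sqrt 3 := by nlinarith
  have hpi2 : (3.141592:ℝ) < π := Real.pi_gt_d6
  -- factorial/power algebra
  have hfac : (Nat.factorial (2*n+1) : ℝ) = (2*n+1 : ℝ) * (Nat.factorial (2*n) : ℝ) := by
    rw [show (2*n+1) = (2*n) + 1 from rfl, Nat.factorial_succ]
    push_cast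
    ring
  have hpow2 : (2*π) ^ (2*n+1) = 4 * (2:ℝ)^(2*n-1) * π^(2*n) * π := by
    rw [mul_pow]
    have h1 : (2:ℝ)^(2*n+1) = 4 * (2:ℝ)^(2*n-1) := by
      rw [show 2*n+1 = (2*n-1) + 2 by omega, pow_add]
      ring
    have h2 : π^(2*n+1) = π^(2*n) * π := by rw [pow_succ]
    rw [h1, h2]
    ring
  set A : ℝ := (Nat.factorial (2*n) : ℝ) with hA
  set Q : ℝ := π^(2*n) with hQ
  set R : ℝ := (2:ℝ)^(2*n-1) with hR
  have hApos : 0 < A := by positivity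
  have hQpos : 0 < Q := by positivity
  have hRpos : 0 < R := by positivity
  have hR8 : (8:ℝ) ≤ R := by
    rw [hR, show (8:ℝ) = 2^3 by norm_num]
    exact pow_le_pow_right₀ one_le_two (by omega)
  -- final bound for |B|
  have hBle : |B (2*n+1) t| ≤ (907/864) * 2 * ((2*n+1:ℝ) * A) / (4 * R * Q * π) := by
    rw [hpow2, hfac] at habs2
    have habs2' : (4 * R * Q * π) * |B (2*n+1) t| ≤ (907/864) * (2 * ((2*n+1:ℝ) * A)) := by
      rw [div_div, div_mul_eq_mul_div, div_le_iff₀ (by positivity)] at habs2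
      linarith
    rw [le_div_iff₀ (by positivity : (0:ℝ) < 4 * R * Q * π)]
    nlinarith [habs2']
  -- chain
  have hRHSge : (Real.sqrt 3 / 9) * (7/8) * (2*n+1 : ℝ) * (A / (R * Q))
      ≤ (Real.sqrt 3 / 9) * (1 - 1/(2:ℝ)^(2*n-1)) * (2*n+1 : ℝ) * |Bnum (2*n)| := by
    have hs3 : (0:ℝ) < Real.sqrt 3 := by linarith
    have h78 : (7/8:ℝ) ≤ 1 - 1/R := by
      have : 1/R ≤ 1/8 := one_div_le_one_div_of_le (by norm_num) hR8
      linarith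
    have hfac1 : (0:ℝ) < (2*n+1 : ℝ) := by positivity
    have hAq : 0 < A / (R * Q) := by positivity
    calc (Real.sqrt 3 / 9) * (7/8) * (2*n+1 : ℝ) * (A / (R * Q))
        ≤ (Real.sqrt 3 / 9) * (1 - 1/R) * (2*n+1 : ℝ) * (A / (R * Q)) := by
          apply mul_le_mul_of_nonneg_right _ hAq.le
          apply mul_le_mul_of_nonneg_right _ hfac1.le
          apply mul_le_mul_of_nonneg_left h78 (by positivity)
      _ ≤ (Real.sqrt 3 / 9) * (1 - 1/R) * (2*n+1 : ℝ) * |Bnum (2*n)| := by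
          apply mul_le_mul_of_nonneg_left hBnum
          have : (0:ℝ) < 1 - 1/R := by linarith
          positivity
  -- strict numeric inequality
  have hnum : (907/864:ℝ) * 2 * ((2*n+1:ℝ) * A) / (4 * R * Q * π)
      < (Real.sqrt 3 / 9) * (7/8) * (2*n+1 : ℝ) * (A / (R * Q)) := by
    have hX : (0:ℝ) < (2*n+1 : ℝ) * A / (R * Q) := by positivity
    have key : (907:ℝ)/(1728*π) < 7 * Real.sqrt 3 / 72 := by
      rw [div_lt_div_iff₀ (by positivity) (by norm_num)]
      have hprod : (1.732:ℝ) * 3.141592 < Real.sqrt 3 * π :=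
        mul_lt_mul'' hsqrt3 hpi2 (by norm_num) (by norm_num)
      linarith [hprod]
    have lhs_eq : (907/864:ℝ) * 2 * ((2*n+1:ℝ) * A) / (4 * R * Q * π)
        = (907/(1728*π)) * ((2*n+1 : ℝ) * A / (R * Q)) :=
      aux_lhs _ _ _ _ hRpos.ne' hQpos.ne' hpi.ne'
    have rhs_eq : (Real.sqrt 3 / 9) * (7/8) * (2*n+1 : ℝ) * (A / (R * Q))
        = (7 * Real.sqrt 3 / 72) * ((2*n+1 : ℝ) * A / (R * Q)) :=
      aux_rhs _ _ _ _ _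
    rw [lhs_eq, rhs_eq]
    exact mul_lt_mul_of_pos_right key hX
  calc |B (2*n+1) t| ≤ (907/864) * 2 * ((2*n+1:ℝ) * A) / (4 * R * Q * π) := hBle
    _ < (Real.sqrt 3 / 9) * (7/8) * (2*n+1 : ℝ) * (A / (R * Q)) := hnum
    _ ≤ _ := hRHSge
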